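/- Let D ⊆ ℝⁿ be an open convex set, let q : ℝⁿ → ℝ be a quadratic function q(x) = ½·xᵀAx + bᵀx + β with A symmetric, and let f : ℝⁿ → ℝ be three times continuously differentiable and self-concordant on D. Assume q + f is convex on D. Then g(x) := 8·(q(x) + 2·f(x)) is self-concordant on D. -/

import Mathlib

open Filter Set Topology

lemma deriv_nonneg_of_monotoneOn' {S : Set ℝ} (hS : IsOpen S) {t₀ : ℝ} (ht₀ : t₀ ∈ S)
    {ψ : ℝ → ℝ} (hm : MonotoneOn ψ S) {d : ℝ} (hd : HasDerivAt ψ d t₀) : 0 ≤ d := by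
  have hconv := hasDerivAt_iff_tendsto_slope.1 hd
  refine ge_of_tendsto hconv ?_
  have hmem : S \ {t₀} ∈ 𝓝[≠] t₀ := diff_mem_nhdsWithin_compl (hS.mem_nhds ht₀) {t₀}
  filter_upwards [hmem] with t ht
  have htne : t ≠ t₀ := by simpa using ht.2
  rcases lt_or_gt_of_ne htne with hlt | hgt
  · rw [slope_def_field]
    have h1 : ψ t ≤ ψ t₀ := hm ht.1 ht₀ hlt.le
    exact div_nonneg_of_nonpos (by linarith) (by linarith)
  · rw [slope_def_field]
    have h1 : ψ t₀ ≤ ψ t := hm ht₀ ht.1 hgt.le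
    exact div_nonneg (by linarith) (by linarith)

lemma second_deriv_nonneg_of_convexOn' {E : Type*} [NormedAddCommGroup E] [NormedSpace ℝ E]
    {D : Set E} (hD : IsOpen D) {h : E → ℝ} (hh : ContDiffOn ℝ 2 h D)
    (hconv : ConvexOn ℝ D h) {x : E} (hx : x ∈ D) (v : E) :
    0 ≤ fderiv ℝ (fderiv ℝ h) x v v := by
  set c : ℝ → E := fun t => x + t • v with hcdef
  set aff : ℝ →ᵃ[ℝ] E := AffineMap.lineMap x (x + v) with haff
  have hc : ⇑aff = c := by
    funext t; simp [haff, AffineMap.lineMap_apply, hcdef]; abel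
  set S : Set ℝ := c ⁻¹' D with hSdef
  have hccont : Continuous c := by fun_prop
  have hSopen : IsOpen S := hD.preimage hccont
  have hc0 : c 0 = x := by simp [hcdef]
  have h0S : (0 : ℝ) ∈ S := by simp [hSdef, mem_preimage, hc0, hx]
  have hdiff : ∀ y ∈ D, DifferentiableAt ℝ h y := fun y hy =>
    ((hh y hy).contDiffAt (hD.mem_nhds hy)).differentiableAt (by norm_num)
  set φ : ℝ → ℝ := h ∘ c with hφ
  set φ₁ : ℝ → ℝ := fun t => fderiv ℝ h (c t) v with hφ₁
  have hcderiv : ∀ t : ℝ, HasDerivAt c v t := by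
    intro t
    simpa [hcdef] using ((hasDerivAt_id t).smul_const v).const_add x
  have hφd : ∀ t ∈ S, HasDerivAt φ (φ₁ t) t := fun t ht =>
    (hdiff _ ht).hasFDerivAt.comp_hasDerivAt t (hcderiv t)
  have hconvφ : ConvexOn ℝ S φ := by
    have := hconv.comp_affineMap aff
    rwa [hc] at this
  have hmono : MonotoneOn φ₁ S := by
    have hmono' := hconvφ.monotoneOn_deriv (fun t ht => (hφd t ht).differentiableAt)
    intro t ht u hu htu
    rw [← (hφd t ht).deriv, ← (hφd u hu).deriv]
    exact hmono' ht hu htu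
  have hfd2 : DifferentiableAt ℝ (fderiv ℝ h) x := by
    have h2 : ContDiffAt ℝ 2 h x := (hh x hx).contDiffAt (hD.mem_nhds hx)
    exact (h2.fderiv_right (m := 1) (by norm_num)).differentiableAt (by norm_num)
  have hφ₁d : HasDerivAt φ₁ (fderiv ℝ (fderiv ℝ h) x v v) 0 := by
    have hfd2' : HasFDerivAt (fderiv ℝ h) (fderiv ℝ (fderiv ℝ h) x) (c 0) := by
      rw [hc0]; exact hfd2.hasFDerivAt
    have h1 : HasDerivAt (fun t : ℝ => fderiv ℝ h (c t)) (fderiv ℝ (fderiv ℝ h) x v) 0 :=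
      hfd2'.comp_hasDerivAt 0 (hcderiv 0)
    have h2 := (ContinuousLinearMap.apply ℝ ℝ v).hasFDerivAt.comp_hasDerivAt 0 h1
    exact h2
  exact deriv_nonneg_of_monotoneOn' hSopen h0S hmono hφ₁d

lemma quad_third_deriv_zero' {n : ℕ} (A : Matrix (Fin n) (Fin n) ℝ) (b : Fin n → ℝ) (β : ℝ)
    (q : EuclideanSpace ℝ (Fin n) → ℝ)
    (hq : ∀ x, q x = (1 / 2) * ∑ i, ∑ j, A i j * x i * x j + ∑ i, b i * x i + β) :
    ∀ (x : EuclideanSpace ℝ (Fin n)) (m : Fin 3 → EuclideanSpace ℝ (Fin n)),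
      iteratedFDeriv ℝ 3 q x m = 0 := by
  set P : (Fin n) → (EuclideanSpace ℝ (Fin n) →L[ℝ] ℝ) := fun i => EuclideanSpace.proj i with hP
  set N : EuclideanSpace ℝ (Fin n) →L[ℝ] (EuclideanSpace ℝ (Fin n) →L[ℝ] ℝ) :=
    (1/2 : ℝ) • ∑ i, ∑ j, A i j • ((P i).smulRight (P j) + (P j).smulRight (P i)) with hN
  set cb : EuclideanSpace ℝ (Fin n) →L[ℝ] ℝ := ∑ i, b i • P i with hcb
  have hqe : q = fun x => (1 / 2) * ∑ i, ∑ j, A i j * x i * x j + ∑ i, b i * x i + β :=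
    funext hq
  have step1 : ∀ x, HasFDerivAt q (N x + cb) x := by
    intro x
    have h1 : HasFDerivAt (fun x : EuclideanSpace ℝ (Fin n) =>
          (1 / 2) * ∑ i, ∑ j, A i j * x i * x j + ∑ i, b i * x i + β)
        ((1/2 : ℝ) • (∑ i, ∑ j, ((A i j * x i) • P j + x j • (A i j • P i))) + ∑ i, b i • P i) x := by
      refine HasFDerivAt.add_const β ?_
      refine HasFDerivAt.add ?_ ?_
      · exact (HasFDerivAt.fun_sum fun i _ => HasFDerivAt.fun_sum fun j _ =>
          ((P i).hasFDerivAt.const_mul (A i j)).mul (P j).hasFDerivAt).const_mul (1/2 : ℝ)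
      · exact HasFDerivAt.fun_sum fun i _ => (P i).hasFDerivAt.const_mul (b i)
    rw [hqe]
    convert h1 using 1
    ext w
    simp [hN, hcb, ContinuousLinearMap.sum_apply, ContinuousLinearMap.smulRight_apply, hP]
    exact Finset.sum_congr rfl fun i _ => Finset.sum_congr rfl fun j _ => by ring
  have step3 : fderiv ℝ q = fun x => N x + cb := funext fun x => (step1 x).fderiv
  have step4 : fderiv ℝ (fderiv ℝ q) = fun _ => N := by
    funext x
    rw [step3]
    exact (N.hasFDerivAt.add_const cb).fderiv
  intro x m
  rw [iteratedFDeriv_succ_apply_right, iteratedFDeriv_two_apply, step4]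
  simp

lemma quad_contDiff' {n : ℕ} (A : Matrix (Fin n) (Fin n) ℝ) (b : Fin n → ℝ) (β : ℝ)
    (q : EuclideanSpace ℝ (Fin n) → ℝ)
    (hq : ∀ x, q x = (1 / 2) * ∑ i, ∑ j, A i j * x i * x j + ∑ i, b i * x i + β) :
    ContDiff ℝ ⊤ q := by
  rw [funext hq]
  have h1 : ContDiff ℝ ⊤ (fun x : EuclideanSpace ℝ (Fin n) => ∑ i, ∑ j, A i j * x i * x j) :=
    ContDiff.sum fun i _ => ContDiff.sum fun j _ =>
      (contDiff_const.mul (EuclideanSpace.proj (𝕜 := ℝ) i).contDiff).mul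
        (EuclideanSpace.proj (𝕜 := ℝ) j).contDiff
  have h2 : ContDiff ℝ ⊤ (fun x : EuclideanSpace ℝ (Fin n) => ∑ i, b i * x i) :=
    ContDiff.sum fun i _ => contDiff_const.mul (EuclideanSpace.proj (𝕜 := ℝ) i).contDiff
  exact ((contDiff_const.mul h1).add h2).add contDiff_const

theorem stmt_1 (n : ℕ) (D : Set (EuclideanSpace ℝ (Fin n)))
    (hD : IsOpen D) (hDconv : Convex ℝ D)
    (A : Matrix (Fin n) (Fin n) ℝ) (hA : A.IsSymm) (b : Fin n → ℝ) (β : ℝ)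
    (q f : EuclideanSpace ℝ (Fin n) → ℝ)
    (hq : ∀ x, q x = (1 / 2) * ∑ i, ∑ j, A i j * x i * x j + ∑ i, b i * x i + β)
    (hf : ContDiffOn ℝ 3 f D)
    (hfsc : ∀ x ∈ D, ∀ v : EuclideanSpace ℝ (Fin n),
      0 ≤ iteratedFDeriv ℝ 2 f x ![v, v] ∧
      |iteratedFDeriv ℝ 3 f x ![v, v, v]| ≤
        2 * (iteratedFDeriv ℝ 2 f x ![v, v]) ^ ((3 : ℝ) / 2))
    (hconv : ConvexOn ℝ D (fun x => q x + f x)) :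
    ∀ x ∈ D, ∀ v : EuclideanSpace ℝ (Fin n),
      0 ≤ iteratedFDeriv ℝ 2 (fun y => 8 * (q y + 2 * f y)) x ![v, v] ∧
      |iteratedFDeriv ℝ 3 (fun y => 8 * (q y + 2 * f y)) x ![v, v, v]| ≤
        2 * (iteratedFDeriv ℝ 2 (fun y => 8 * (q y + 2 * f y)) x ![v, v]) ^ ((3 : ℝ) / 2) := by
  intro x hx v
  have hu : UniqueDiffOn ℝ D := hD.uniqueDiffOn
  have cq : ContDiff ℝ ⊤ q := quad_contDiff' A b β q hq
  set a : ℝ := iteratedFDeriv ℝ 2 f x ![v, v] with ha_def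
  set T : ℝ := iteratedFDeriv ℝ 3 f x ![v, v, v] with hT_def
  set s : ℝ := iteratedFDeriv ℝ 2 q x ![v, v] with hs_def
  obtain ⟨ha, hT⟩ := hfsc x hx v
  -- derivative decomposition
  have hGeq : (fun y => 8 * (q y + 2 * f y)) = (8 : ℝ) • (q + (2 : ℝ) • f) := by
    funext y
    simp [Pi.smul_apply, Pi.add_apply, smul_eq_mul]
  have e : ∀ k : ℕ, ContDiffOn ℝ k f D →
      iteratedFDeriv ℝ k (fun y => 8 * (q y + 2 * f y)) x =
        (8 : ℝ) • (iteratedFDeriv ℝ k q x + (2 : ℝ) • iteratedFDeriv ℝ k f x) := by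
    intro k hfk
    have hqk : ContDiffOn ℝ k q D := (cq.of_le le_top).contDiffOn
    have hf2 : ContDiffOn ℝ k ((2 : ℝ) • f) D := hfk.const_smul (2 : ℝ)
    have hsum : ContDiffOn ℝ k (q + (2 : ℝ) • f) D := hqk.add hf2
    have h1 : iteratedFDeriv ℝ k (fun y => 8 * (q y + 2 * f y)) x =
        iteratedFDerivWithin ℝ k (fun y => 8 * (q y + 2 * f y)) D x :=
      (iteratedFDerivWithin_of_isOpen k hD hx).symm
    rw [h1, hGeq, iteratedFDerivWithin_const_smul_apply (hsum x hx) hu hx,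
      iteratedFDerivWithin_add_apply (hqk x hx) (hf2 x hx) hu hx,
      iteratedFDerivWithin_const_smul_apply (hfk x hx) hu hx,
      iteratedFDerivWithin_of_isOpen (f := q) k hD hx,
      iteratedFDerivWithin_of_isOpen (f := f) k hD hx]
  have hG2 : iteratedFDeriv ℝ 2 (fun y => 8 * (q y + 2 * f y)) x ![v, v] = 8 * s + 16 * a := by
    rw [e 2 (hf.of_le (by norm_num))]
    simp [ContinuousMultilinearMap.smul_apply, ContinuousMultilinearMap.add_apply,
      smul_eq_mul, ← hs_def, ← ha_def]
    ring
  have hq3z : iteratedFDeriv ℝ 3 q x ![v, v, v] = 0 := quad_third_deriv_zero' A b β q hq x _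
  have hG3 : iteratedFDeriv ℝ 3 (fun y => 8 * (q y + 2 * f y)) x ![v, v, v] = 16 * T := by
    rw [e 3 (hf.of_le le_rfl)]
    simp [ContinuousMultilinearMap.smul_apply, ContinuousMultilinearMap.add_apply,
      smul_eq_mul, hq3z, ← hT_def]
    ring
  -- convexity gives s + a ≥ 0
  have hsum2 : ContDiffOn ℝ 2 (fun y => q y + f y) D :=
    ((cq.of_le le_top).contDiffOn : ContDiffOn ℝ 2 q D).add (hf.of_le (by norm_num))
  have hpos := second_deriv_nonneg_of_convexOn' hD hsum2 hconv hx v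
  have hsum_eq : iteratedFDeriv ℝ 2 (fun y => q y + f y) x ![v, v] = s + a := by
    have h1 : iteratedFDeriv ℝ 2 (fun y => q y + f y) x =
        iteratedFDerivWithin ℝ 2 (fun y => q y + f y) D x :=
      (iteratedFDerivWithin_of_isOpen 2 hD hx).symm
    rw [h1, iteratedFDerivWithin_add_apply' (i := 2) ((cq.of_le le_top).contDiffOn x hx)
        (hf.of_le (by norm_num) x hx) hu hx,
      iteratedFDerivWithin_of_isOpen (f := q) 2 hD hx,
      iteratedFDerivWithin_of_isOpen (f := f) 2 hD hx]
    simp [← hs_def, ← ha_def]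
  have h3 : 0 ≤ s + a := by
    rw [← hsum_eq]
    have e2 : iteratedFDeriv ℝ 2 (fun y => q y + f y) x ![v, v] =
        fderiv ℝ (fderiv ℝ (fun y => q y + f y)) x v v := by
      rw [iteratedFDeriv_two_apply]
      simp
    rw [e2]
    exact hpos
  constructor
  · rw [hG2]; linarith
  · rw [hG2, hG3]
    have hbase : (0 : ℝ) ≤ 8 * a := by linarith
    have hle : (8 * a : ℝ) ≤ 8 * s + 16 * a := by linarith
    have hr : (8 * a : ℝ) ^ ((3 : ℝ) / 2) ≤ (8 * s + 16 * a) ^ ((3 : ℝ) / 2) :=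
      Real.rpow_le_rpow hbase hle (by norm_num)
    have hmulr : (8 * a : ℝ) ^ ((3 : ℝ) / 2) = 8 ^ ((3 : ℝ) / 2) * a ^ ((3 : ℝ) / 2) :=
      Real.mul_rpow (by norm_num) ha
    have h16 : (16 : ℝ) ≤ 8 ^ ((3 : ℝ) / 2) := by
      have h8 : ((8 : ℝ)) ^ ((3 : ℝ) / 2) = 8 * 8 ^ ((1 : ℝ) / 2) := by
        rw [show (3 : ℝ) / 2 = 1 + 1 / 2 by norm_num,
          Real.rpow_add (by norm_num : (0 : ℝ) < 8), Real.rpow_one]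
      rw [h8, ← Real.sqrt_eq_rpow]
      nlinarith [Real.sq_sqrt (by norm_num : (0 : ℝ) ≤ 8), Real.sqrt_nonneg 8]
    have hrp : 0 ≤ a ^ ((3 : ℝ) / 2) := Real.rpow_nonneg ha _
    calc |16 * T| = 16 * |T| := by rw [abs_mul]; norm_num
      _ ≤ 16 * (2 * a ^ ((3 : ℝ) / 2)) := by nlinarith
      _ = 32 * a ^ ((3 : ℝ) / 2) := by ring
      _ ≤ 2 * (8 ^ ((3 : ℝ) / 2) * a ^ ((3 : ℝ) / 2)) := by nlinarith
      _ = 2 * (8 * a) ^ ((3 : ℝ) / 2) := by rw [hmulr]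
      _ ≤ 2 * (8 * s + 16 * a) ^ ((3 : ℝ) / 2) := by linarith
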